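/- In the DCR graph encoding of a CRES (where every event excludes itself and conflicting events mutually exclude each other, initial marking (∅, Re, E)), after executing any sequence of events e₀,...,e_{n-1}, the set of included events In_n equals E minus the set {e' | ∃ i < n, e' = e_i or e' # e_i}; in particular every executed event is excluded. -/

import Mathlib

/-- A marking of a DCR graph: (executed, pending responses, included). -/
abbrev Marking (E : Type*) := Set E × Set E × Set E

/-- Effect of executing event `e` on a marking. -/
def dcrExec {E : Type*} (resp incl excl : E → E → Prop) (M : Marking E) (e : E) :
    Marking E :=
  (M.1 ∪ {e}, (M.2.1 \ {e}) ∪ {e' | resp e e'},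
    (M.2.2 ∪ {e' | incl e e'}) \ {e' | excl e e'})

/-- Event `e` is enabled in marking `M`: it is included and all its included
condition events have been executed. -/
def dcrEnabled {E : Type*} (cond : E → E → Prop) (M : Marking E) (e : E) : Prop :=
  e ∈ M.2.2 ∧ {e' | e' ∈ M.2.2 ∧ cond e' e} ⊆ M.1

/-- One optional step: `none` leaves the marking unchanged. -/
def dcrStepOpt {E : Type*} (resp incl excl : E → E → Prop) (M : Marking E) :
    Option E → Marking E
  | none => M
  | some e => dcrExec resp incl excl M e

/-- The marking reached after the first `n` steps of the (possibly finite) run `ρ`. -/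
def markAt {E : Type*} (resp incl excl : E → E → Prop) (M0 : Marking E)
    (ρ : ℕ → Option E) : ℕ → Marking E
  | 0 => M0
  | n + 1 => dcrStepOpt resp incl excl (markAt resp incl excl M0 ρ n) (ρ n)

/-- A (finite or infinite) run of a DCR graph from initial marking `M0`: defined
positions form an initial segment and every executed event is enabled. -/
def IsDCRRun {E : Type*} (cond resp incl excl : E → E → Prop) (M0 : Marking E)
    (ρ : ℕ → Option E) : Prop :=
  (∀ i j, i ≤ j → ρ i = none → ρ j = none) ∧
  (∀ i e, ρ i = some e → dcrEnabled cond (markAt resp incl excl M0 ρ i) e)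

/-- A run is accepting if no event stays included and pending forever without being
executed: every pending response is eventually executed or excluded. -/
def DCRAccepting {E : Type*} (resp incl excl : E → E → Prop) (M0 : Marking E)
    (ρ : ℕ → Option E) : Prop :=
  ∀ i e, e ∈ (markAt resp incl excl M0 ρ i).2.1 →
    ∃ j, i ≤ j ∧ (ρ j = some e ∨ e ∉ (markAt resp incl excl M0 ρ j).2.2)

/-- In the DCR graph encoding of a CRES (every event excludes itself, conflicting events
mutually exclude each other, no include relation, initial marking `(∅, Re, E)`), after
`n` steps of any run the included set equals `E` minus the events equal to or in
conflict with some executed event; in particular every executed event is excluded. -/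
theorem stmt6 {E : Type*} (conf : E → E → Prop)
    (hirr : ∀ e, ¬ conf e e) (hsym : ∀ e e', conf e e' → conf e' e)
    (resp : E → E → Prop) (Re : Set E) (cond : E → E → Prop)
    (ρ : ℕ → Option E)
    (hrun : IsDCRRun cond resp (fun _ _ => False) (fun e e' => e = e' ∨ conf e e')
      (∅, Re, Set.univ) ρ) :
    ∀ n : ℕ,
      (markAt resp (fun _ _ => False) (fun e e' => e = e' ∨ conf e e')
          (∅, Re, Set.univ) ρ n).2.2 =
        Set.univ \ {e' | ∃ i < n, ∃ a, ρ i = some a ∧ (e' = a ∨ conf e' a)} ∧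
      ∀ e ∈ (markAt resp (fun _ _ => False) (fun e e' => e = e' ∨ conf e e')
          (∅, Re, Set.univ) ρ n).1,
        e ∉ (markAt resp (fun _ _ => False) (fun e e' => e = e' ∨ conf e e')
          (∅, Re, Set.univ) ρ n).2.2 := by
  set R := markAt resp (fun _ _ => False) (fun e e' => e = e' ∨ conf e e')
      (∅, Re, Set.univ) ρ with hR
  have key : ∀ n : ℕ,
      (R n).2.2 = Set.univ \ {e' | ∃ i < n, ∃ a, ρ i = some a ∧ (e' = a ∨ conf e' a)} ∧
      (R n).1 = {e | ∃ i < n, ρ i = some e} := by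
    intro n
    induction n with
    | zero =>
      constructor
      · ext x; simp [hR, markAt]
      · ext x; simp [hR, markAt]
    | succ n ih =>
      obtain ⟨ih1, ih2⟩ := ih
      rw [hR] at *
      cases h : ρ n with
      | none =>
        simp only [markAt, dcrStepOpt, h]
        constructor
        · rw [ih1]; ext x
          simp only [Set.mem_diff, Set.mem_setOf_eq, Set.mem_univ, true_and]
          constructor
          · rintro hx ⟨i, hi, a, ha, hc⟩
            rcases Nat.lt_succ_iff_lt_or_eq.mp hi with hi' | rfl
            · exact hx ⟨i, hi', a, ha, hc⟩
            · rw [h] at ha; exact nomatch ha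
          · rintro hx ⟨i, hi, a, ha, hc⟩
            exact hx ⟨i, Nat.lt_succ_of_lt hi, a, ha, hc⟩
        · rw [ih2]; ext x
          simp only [Set.mem_setOf_eq]
          constructor
          · rintro ⟨i, hi, ha⟩; exact ⟨i, Nat.lt_succ_of_lt hi, ha⟩
          · rintro ⟨i, hi, ha⟩
            rcases Nat.lt_succ_iff_lt_or_eq.mp hi with hi' | rfl
            · exact ⟨i, hi', ha⟩
            · rw [h] at ha; exact nomatch ha
      | some a =>
        simp only [markAt, dcrStepOpt, h, dcrExec]
        constructor
        · rw [ih1]; ext x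
          simp only [Set.mem_diff, Set.mem_union, Set.mem_setOf_eq, Set.mem_univ,
            true_and, or_false]
          constructor
          · rintro ⟨hx, hne⟩ ⟨i, hi, b, hb, hc⟩
            rcases Nat.lt_succ_iff_lt_or_eq.mp hi with hi' | rfl
            · exact hx ⟨i, hi', b, hb, hc⟩
            · rw [h] at hb; injection hb with hb; subst hb
              rcases hc with rfl | hc
              · exact hne (Or.inl rfl)
              · exact hne (Or.inr (hsym _ _ hc))
          · intro hx
            refine ⟨fun hex => ?_, fun hc => ?_⟩
            · obtain ⟨i, hi, b, hb, hcb⟩ := hex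
              exact hx ⟨i, Nat.lt_succ_of_lt hi, b, hb, hcb⟩
            · rcases hc with h' | h'
              · exact hx ⟨n, Nat.lt_succ_self n, a, h, Or.inl h'.symm⟩
              · exact hx ⟨n, Nat.lt_succ_self n, a, h, Or.inr (hsym _ _ h')⟩
        · rw [ih2]; ext x
          simp only [Set.mem_union, Set.mem_setOf_eq, Set.mem_singleton_iff]
          constructor
          · rintro (⟨i, hi, ha⟩ | rfl)
            · exact ⟨i, Nat.lt_succ_of_lt hi, ha⟩
            · exact ⟨n, Nat.lt_succ_self n, h⟩
          · rintro ⟨i, hi, ha⟩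
            rcases Nat.lt_succ_iff_lt_or_eq.mp hi with hi' | rfl
            · exact Or.inl ⟨i, hi', ha⟩
            · rw [h] at ha; injection ha with ha; exact Or.inr ha.symm
  intro n
  obtain ⟨h1, h2⟩ := key n
  refine ⟨h1, fun e he => ?_⟩
  rw [h1]
  rw [h2] at he
  obtain ⟨i, hi, ha⟩ := he
  rintro ⟨-, hx⟩
  exact hx ⟨i, hi, e, ha, Or.inl rfl⟩
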